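/- For γ > 2 let d_k = 2(⌊γ^k/2⌋+1), t_0 = 0, x_0 = 0, t_{k+1} = t_k + d_k², x_{k+1} = x_k + d_k, and let ∂^γ : [0,∞) → ℝ be the right-continuous step function with ∂^γ(t) = x_n − d_n for t ∈ [t_n, t_{n+1}). For K > 0, let γ(K) be the solution in (2,∞) of K = (γ−2)√((γ+1)/(γ−1)). Then for all t ≥ 0, ∂^{γ(K)}(t) ≥ −3 − K√t. Moreover, γ ↦ (γ−2)√((γ+1)/(γ−1)) is a continuous increasing function mapping (2,∞) onto (0,∞), so γ(K) is well defined for every K > 0. -/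

import Mathlib

open MeasureTheory ProbabilityTheory Filter Set
open scoped ENNReal NNReal

noncomputable section

namespace DyDWPaper

/-- Linear interpolation of a discrete-time path at real times `t ≥ 0`. -/
def interp (w : ℕ → ℤ) (t : ℝ) : ℝ :=
  ((⌊t⌋₊ + 1 : ℝ) - t) * (w ⌊t⌋₊ : ℝ) + (t - (⌊t⌋₊ : ℝ)) * (w (⌊t⌋₊ + 1) : ℝ)

/-- Diffusive rescaling `π̃(t) = δ·π(t/δ²)`. -/
def rescale (δ : ℝ) (f : ℝ → ℝ) : ℝ → ℝ := fun t => δ * f (t / δ ^ 2)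

/-- The event `O = {π : π(t) > −1 on [0,1] and π(1) > 1}`. -/
def OEvent (f : ℝ → ℝ) : Prop := (∀ t ∈ Set.Icc (0 : ℝ) 1, f t > -1) ∧ f 1 > 1

/-- The `r`-neighbourhood `O + r` of `O` in sup norm on `C([0,1])`. -/
def OPlus (r : ℝ) : Set (ℝ → ℝ) :=
  {f | ∃ g : ℝ → ℝ, ContinuousOn g (Set.Icc (0 : ℝ) 1) ∧ OEvent g ∧
    ∀ t ∈ Set.Icc (0 : ℝ) 1, |f t - g t| ≤ r}

/-- A model of the dynamical discrete web: i.i.d. (over even sites of `ℤ²`) arrow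
processes, each one a stationary right-continuous `{±1}`-valued Markov jump process
in the dynamical time `τ`, switching at rate `1/2` (uniform resampling at rate 1). -/
structure Model (Ω : Type) [MeasurableSpace Ω] where
  P : Measure Ω
  prob : IsProbabilityMeasure P
  ξ : ℤ × ℤ → ℝ → Ω → ℤ
  vals : ∀ z τ ω, 0 ≤ τ → Even (z.1 + z.2) → ξ z τ ω = 1 ∨ ξ z τ ω = -1
  meas : ∀ z τ, Measurable (ξ z τ)
  rightCont : ∀ ω z τ, 0 ≤ τ → Even (z.1 + z.2) →
    ∃ ε > 0, ∀ τ', τ ≤ τ' → τ' < τ + ε → ξ z τ' ω = ξ z τ ω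
  fdd : ∀ z, Even (z.1 + z.2) → ∀ (n : ℕ) (τ : Fin (n + 1) → ℝ),
    0 ≤ τ 0 → StrictMono τ → ∀ e : Fin (n + 1) → ℤ, (∀ i, e i = 1 ∨ e i = -1) →
    (P {ω | ∀ i, ξ z (τ i) ω = e i}).toReal =
      (1 / 2) * ∏ i : Fin n,
        (if e i.succ = e i.castSucc
          then (1 + Real.exp (-(τ i.succ - τ i.castSucc))) / 2
          else (1 - Real.exp (-(τ i.succ - τ i.castSucc))) / 2)
  indep : iIndepFun
    (fun (z : {z : ℤ × ℤ // Even (z.1 + z.2)}) ω => fun τ : ℝ => ξ z.1 τ ω) P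

variable {Ω Ω' : Type} [MeasurableSpace Ω] [MeasurableSpace Ω']

/-- The discrete random walk started from `(x,s) ∈ ℤ²_even` following the arrows at
dynamical time `τ`; `walk ω τ x s n` is its position at (absolute) time `s + n`. -/
def Model.walk (M : Model Ω) (ω : Ω) (τ : ℝ) (x s : ℤ) : ℕ → ℤ
  | 0 => x
  | n + 1 => M.walk ω τ x s n + M.ξ (M.walk ω τ x s n, s + (n : ℤ)) τ ω

/-- The walk from `(x,s)` as a real-time path (linear interpolation), evaluated at
absolute time `t ≥ s`. -/
def Model.path (M : Model Ω) (ω : Ω) (τ : ℝ) (x s : ℤ) (t : ℝ) : ℝ :=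
  interp (fun n => M.walk ω τ x s n) (t - (s : ℝ))

/-- The path `S₀^τ` from the origin, interpolated to real times. -/
def Model.S0 (M : Model Ω) (τ : ℝ) (ω : Ω) : ℝ → ℝ :=
  fun t => interp (fun n => M.walk ω τ 0 0 n) t

/-- A simple symmetric random walk: i.i.d. uniform `{±1}` increments `X n`. -/
structure RW (Ω : Type) [MeasurableSpace Ω] where
  P : Measure Ω
  prob : IsProbabilityMeasure P
  X : ℕ → Ω → ℤ
  vals : ∀ n ω, X n ω = 1 ∨ X n ω = -1
  meas : ∀ n, Measurable (X n)
  indep : iIndepFun X P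
  fair : ∀ n, P {ω | X n ω = 1} = 1 / 2

def RW.S (R : RW Ω) (n : ℕ) (ω : Ω) : ℤ := ∑ i ∈ Finset.range n, R.X i ω

def RW.path (R : RW Ω) (ω : Ω) : ℝ → ℝ := interp fun n => R.S n ω

/-- The static discrete web with parameter `p`: i.i.d. arrows over even sites,
right with probability `p`. -/
structure StaticModel (Ω : Type) [MeasurableSpace Ω] (p : ℝ) where
  P : MeasureTheory.Measure Ω
  prob : MeasureTheory.IsProbabilityMeasure P
  ξ : ℤ × ℤ → Ω → ℤ
  vals : ∀ z ω, Even (z.1 + z.2) → ξ z ω = 1 ∨ ξ z ω = -1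
  meas : ∀ z, Measurable (ξ z)
  indep : ProbabilityTheory.iIndepFun
    (fun (z : {z : ℤ × ℤ // Even (z.1 + z.2)}) ω => ξ z.1 ω) P
  marginal : ∀ z, Even (z.1 + z.2) → P {ω | ξ z ω = 1} = ENNReal.ofReal p

/-- The deterministic walk from the origin reading off an arrow configuration `c`. -/
def walkOf (c : ℤ × ℤ → ℤ) : ℕ → ℤ
  | 0 => 0
  | n + 1 => walkOf c n + c (walkOf c n, (n : ℤ))

def StaticModel.walk {Ω : Type} [MeasurableSpace Ω] {p : ℝ} (SM : StaticModel Ω p)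
    (ω : Ω) : ℕ → ℤ := walkOf fun z => SM.ξ z ω

/-- A simple random walk with probability `p` for a `+1` increment. -/
structure RWp (Ω : Type) [MeasurableSpace Ω] (p : ℝ) where
  P : MeasureTheory.Measure Ω
  prob : MeasureTheory.IsProbabilityMeasure P
  X : ℕ → Ω → ℤ
  vals : ∀ n ω, X n ω = 1 ∨ X n ω = -1
  meas : ∀ n, Measurable (X n)
  indep : ProbabilityTheory.iIndepFun X P
  marginal : ∀ n, P {ω | X n ω = 1} = ENNReal.ofReal p

def RWp.S {Ω : Type} [MeasurableSpace Ω] {p : ℝ} (R : RWp Ω p) (n : ℕ) (ω : Ω) : ℤ :=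
  ∑ i ∈ Finset.range n, R.X i ω

/-- A standard one-dimensional Brownian motion started at `0`. -/
structure BM (Ω : Type) [MeasurableSpace Ω] where
  P : MeasureTheory.Measure Ω
  prob : MeasureTheory.IsProbabilityMeasure P
  B : ℝ → Ω → ℝ
  meas : ∀ t, Measurable (B t)
  start : ∀ ω, B 0 ω = 0
  cont : ∀ ω, Continuous fun t => B t ω
  incr : ∀ s t : ℝ, 0 ≤ s → s ≤ t →
    MeasureTheory.Measure.map (fun ω => B t ω - B s ω) P =
      ProbabilityTheory.gaussianReal 0 ((t - s).toNNReal)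
  indepIncr : ∀ (n : ℕ) (t : Fin (n + 1) → ℝ), 0 ≤ t 0 → StrictMono t →
    ProbabilityTheory.iIndepFun
      (fun (i : Fin n) ω => B (t i.succ) ω - B (t i.castSucc) ω) P

/-- `K(γ) = (γ−2)√((γ+1)/(γ−1))`. -/
def Kfun (γ : ℝ) : ℝ := (γ - 2) * Real.sqrt ((γ + 1) / (γ - 1))

/-- `γ(K)`, the solution in `(2,∞)` of `K(γ) = K` (as a supremum, which coincides
with the unique solution for `K > 0`). -/
def gammaOf (K : ℝ) : ℝ := sSup {g : ℝ | 2 < g ∧ Kfun g ≤ K}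

/-- `d_k = 2(⌊γ^k/2⌋+1)`. -/
def dseq (γ : ℝ) (k : ℕ) : ℤ := 2 * (⌊γ ^ k / 2⌋ + 1)

/-- `t_n = d_0² + ⋯ + d_{n−1}²`. -/
def tseq (γ : ℝ) (n : ℕ) : ℤ := ∑ k ∈ Finset.range n, dseq γ k ^ 2

/-- `x_n = d_0 + ⋯ + d_{n−1}`. -/
def xseq (γ : ℝ) (n : ℕ) : ℤ := ∑ k ∈ Finset.range n, dseq γ k

/-- The right-continuous step function `∂^γ`, equal to `x_n − d_n` on `[t_n, t_{n+1})`. -/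
def boundary (γ : ℝ) (t : ℝ) : ℝ :=
  ((xseq γ (sSup {n : ℕ | ((tseq γ n : ℝ)) ≤ t}) : ℝ)) -
    ((dseq γ (sSup {n : ℕ | ((tseq γ n : ℝ)) ≤ t}) : ℝ))

variable {Ω : Type} [MeasurableSpace Ω]

/-- The event `A_k^τ`: the walk of the dynamical web at dynamical time `τ` started from
`z̄_k = (x_k, t_k)` stays strictly to the right of `x_k − d_k` on `[t_k, t_{k+1}]` and is
strictly to the right of `x_{k+1}` at time `t_{k+1}`. -/
def Aevent (M : Model Ω) (γ : ℝ) (k : ℕ) (τ : ℝ) : Set Ω :=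
  {ω | (∀ t ∈ Set.Icc ((tseq γ k : ℝ)) ((tseq γ (k + 1) : ℝ)),
      M.path ω τ (xseq γ k) (tseq γ k) t > ((xseq γ k : ℝ) - (dseq γ k : ℝ))) ∧
    M.path ω τ (xseq γ k) (tseq γ k) ((tseq γ (k + 1) : ℝ)) > (xseq γ (k + 1) : ℝ)}

/-- `γ₀ = sup_{k,K} 1/P(A_k(K))`. -/
def gam0 (M : Model Ω) : ℝ :=
  ⨆ k : ℕ, ⨆ K : {K : ℝ // 0 < K}, ((M.P (Aevent M (gammaOf K.1) k 0)).toReal)⁻¹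

/-- `f(p,K)` from the first-passage asymptotics of Brownian motion below a square-root
boundary; the sum is over `n ≥ 1`. -/
def fseq (p K : ℝ) : ℝ :=
  Real.sin (Real.pi * p / 2) * Real.Gamma (1 + p / 2) / Real.pi *
    ∑' n : ℕ, (Real.sqrt 2 * K) ^ (n + 1) / ((n + 1).factorial : ℝ) *
      Real.Gamma ((((n : ℝ) + 1) - p) / 2)

/-- `p(K)`, the solution in `(0,1)` of `f(p,K) = 1` (as an infimum, which coincides
with the unique solution). -/
def pOf (K : ℝ) : ℝ := sInf {p : ℝ | p ∈ Set.Ioo (0 : ℝ) 1 ∧ fseq p K = 1}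

/-- A path is `K⁺`-subdiffusive iff `π(t) ≥ −j − K√t` for all `t > 0`, for some `j ≥ 0`. -/
def KSubdiffusive (K : ℝ) (π : ℝ → ℝ) : Prop :=
  ∃ j : ℝ, 0 ≤ j ∧ ∀ t : ℝ, 0 < t → π t ≥ -j - K * Real.sqrt t

/-- A path is subdiffusive iff for some finite `K > 0`, `liminf π(t)/√t ≥ −K` or
`limsup π(t)/√t ≤ K`. -/
def Subdiffusive (π : ℝ → ℝ) : Prop :=
  ∃ K : ℝ, 0 < K ∧
    ((-(K : EReal) ≤ Filter.liminf (fun t : ℝ => ((π t / Real.sqrt t : ℝ) : EReal)) Filter.atTop) ∨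
      Filter.limsup (fun t : ℝ => ((π t / Real.sqrt t : ℝ) : EReal)) Filter.atTop ≤ (K : EReal))

/-- The law of the iterated logarithm for a path. -/
def SatisfiesLIL (π : ℝ → ℝ) : Prop :=
  Filter.limsup
      (fun t : ℝ => ((π t / Real.sqrt (2 * t * Real.log (Real.log t)) : ℝ) : EReal))
      Filter.atTop = 1 ∧
  Filter.liminf
      (fun t : ℝ => ((π t / Real.sqrt (2 * t * Real.log (Real.log t)) : ℝ) : EReal))
      Filter.atTop = -1

/-- Modulus of continuity on `[0,1]`. -/
def modulus (f : ℝ → ℝ) (ε : ℝ) : ℝ :=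
  sSup {d : ℝ | ∃ s ∈ Set.Icc (0 : ℝ) 1, ∃ t ∈ Set.Icc (0 : ℝ) 1, |s - t| < ε ∧ d = |f t - f s|}

/-- `l(t) = #{i ≤ t : S_d(i) = S_d'(i)}`. -/
def coalCount (Sd Sd' : ℕ → Ω → ℤ) (ω : Ω) (t : ℕ) : ℕ :=
  ((Finset.range (t + 1)).filter fun i => Sd i ω = Sd' i ω).card

/-- `F(t) = t + Σ_{k ≤ l(t)} ΔT_k`. -/
def clockSum (Sd Sd' : ℕ → Ω → ℤ) (ΔT : ℕ → Ω → ℕ) (ω : Ω) (t : ℕ) : ℕ :=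
  t + ∑ k ∈ Finset.range (coalCount Sd Sd' ω t + 1), ΔT k ω

/-- The right-continuous inverse `C(u) = inf{t : F(t) > u}` (discrete time). -/
def rcInv (Sd Sd' : ℕ → Ω → ℤ) (ΔT : ℕ → Ω → ℕ) (ω : Ω) (u : ℕ) : ℕ :=
  sInf {t : ℕ | u < clockSum Sd Sd' ΔT ω t}

/-- The right-continuous inverse `C(u) = inf{t : F(t) > u}` at a real argument. -/
def rcInvR (Sd Sd' : ℕ → Ω → ℤ) (ΔT : ℕ → Ω → ℕ) (ω : Ω) (u : ℝ) : ℕ :=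
  sInf {t : ℕ | u < (clockSum Sd Sd' ΔT ω t : ℝ)}

/-- The `α`-energy of a measure on `[0,1]`. -/
def energy (α : ℝ) (σ : MeasureTheory.Measure ℝ) : ℝ≥0∞ :=
  ∫⁻ τ in Set.Icc (0 : ℝ) 1, ∫⁻ τ' in Set.Icc (0 : ℝ) 1,
    (ENNReal.ofReal |τ - τ'|) ^ (-α) ∂σ ∂σ

lemma dseq_lo {γ : ℝ} (hγ : 0 ≤ γ) (k : ℕ) : γ ^ k < (dseq γ k : ℝ) := by
  have h := Int.sub_one_lt_floor (γ ^ k / 2)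
  unfold dseq
  push_cast
  linarith

lemma dseq_hi (γ : ℝ) (k : ℕ) : (dseq γ k : ℝ) ≤ γ ^ k + 2 := by
  have h := Int.floor_le (γ ^ k / 2)
  unfold dseq
  push_cast
  linarith

lemma xseq_lo {γ : ℝ} (hγ : 2 < γ) (n : ℕ) : (γ ^ n - 1) / (γ - 1) ≤ (xseq γ n : ℝ) := by
  have hne : γ ≠ 1 := by linarith
  rw [← geom_sum_eq hne]
  unfold xseq
  push_cast
  exact Finset.sum_le_sum fun k _ => (dseq_lo (by linarith) k).le

lemma tseq_lo {γ : ℝ} (hγ : 2 < γ) (n : ℕ) :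
    ((γ ^ n) ^ 2 - 1) / (γ ^ 2 - 1) ≤ (tseq γ n : ℝ) := by
  have hne : γ ^ 2 ≠ 1 := by nlinarith
  have : ((γ ^ n) ^ 2 - 1) / (γ ^ 2 - 1) = ((γ ^ 2) ^ n - 1) / (γ ^ 2 - 1) := by
    rw [← pow_mul, ← pow_mul, Nat.mul_comm]
  rw [this, ← geom_sum_eq hne]
  unfold tseq
  push_cast
  refine Finset.sum_le_sum fun k _ => ?_
  rw [← pow_mul, Nat.mul_comm, pow_mul]
  exact pow_le_pow_left₀ (by positivity) (dseq_lo (by linarith) k).le 2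

lemma tseq_nonneg {γ : ℝ} (hγ : 2 < γ) (n : ℕ) : (0 : ℝ) ≤ (tseq γ n : ℝ) := by
  unfold tseq
  push_cast
  positivity

lemma tseq_ge {γ : ℝ} (hγ : 2 < γ) (n : ℕ) : (4 * n : ℝ) ≤ (tseq γ n : ℝ) := by
  unfold tseq
  push_cast
  calc (4 * n : ℝ) = ∑ _k ∈ Finset.range n, (4:ℝ) := by
        rw [Finset.sum_const, Finset.card_range]; ring
    _ ≤ _ := by
        refine Finset.sum_le_sum fun k _ => ?_
        have h1 : (2:ℝ) ≤ (dseq γ k : ℝ) := by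
          have h := dseq_lo (by linarith : (0:ℝ) ≤ γ) k
          have h2 : (1:ℝ) ≤ γ ^ k := one_le_pow₀ (by linarith)
          have : (1:ℤ) < dseq γ k := by exact_mod_cast lt_of_le_of_lt h2 h
          exact_mod_cast this
        nlinarith

lemma hK2 {γ : ℝ} (hγ : 2 < γ) : Kfun γ ^ 2 = (γ - 2) ^ 2 * ((γ + 1) / (γ - 1)) := by
  unfold Kfun
  rw [mul_pow, Real.sq_sqrt (le_of_lt (div_pos (by linarith) (by linarith)))]

lemma Kfun_pos {γ : ℝ} (hγ : 2 < γ) : 0 < Kfun γ := by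
  unfold Kfun
  have h : 0 < (γ + 1) / (γ - 1) := div_pos (by linarith) (by linarith)
  exact mul_pos (by linarith) (Real.sqrt_pos.mpr h)

lemma main_ineq {γ : ℝ} (hγ : 2 < γ) (n : ℕ) :
    (dseq γ n : ℝ) - (xseq γ n : ℝ) - 3 ≤ Kfun γ * Real.sqrt (tseq γ n) := by
  set a := γ ^ n with ha
  have ha1 : (1:ℝ) ≤ a := one_le_pow₀ (by linarith)
  have hγ1 : (0:ℝ) < γ - 1 := by linarith
  have hstep2 : (dseq γ n : ℝ) - (xseq γ n : ℝ) - 3 ≤ (γ - 2) * (a - 1) / (γ - 1) := by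
    have h1 := dseq_hi γ n
    have h2 := xseq_lo hγ n
    have heq : (γ - 2) * (a - 1) / (γ - 1) = (a - 1) - (a - 1) / (γ - 1) := by
      field_simp
      ring
    rw [heq]
    have : (a - 1) / (γ - 1) ≤ (xseq γ n : ℝ) := h2
    linarith
  refine hstep2.trans ?_
  have hT := tseq_lo hγ n
  have hT0 := tseq_nonneg hγ n
  have hKpos := Kfun_pos hγ
  have hrw : Kfun γ * Real.sqrt (tseq γ n) = Real.sqrt (Kfun γ ^ 2 * (tseq γ n)) := by
    rw [Real.sqrt_mul (sq_nonneg _), Real.sqrt_sq hKpos.le]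
  have hL0 : 0 ≤ (γ - 2) * (a - 1) / (γ - 1) :=
    div_nonneg (mul_nonneg (by linarith) (by linarith)) hγ1.le
  rw [hrw, Real.le_sqrt hL0 (by positivity), hK2 hγ]
  have hT' : (γ ^ n) ^ 2 - 1 ≤ (tseq γ n : ℝ) * (γ ^ 2 - 1) :=
    (div_le_iff₀ (by nlinarith)).mp hT
  have hdd : (γ + 1) / (γ - 1) * (γ - 1) ^ 2 = (γ + 1) * (γ - 1) := by
    field_simp
  rw [div_pow, div_le_iff₀ (by positivity)]
  calc ((γ - 2) * (a - 1)) ^ 2 ≤ (γ - 2) ^ 2 * ((tseq γ n : ℝ) * (γ ^ 2 - 1)) := by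
        nlinarith [sq_nonneg (γ - 2), mul_le_mul_of_nonneg_left hT' (sq_nonneg (γ - 2))]
    _ = (γ - 2) ^ 2 * ((γ + 1) / (γ - 1)) * (tseq γ n : ℝ) * (γ - 1) ^ 2 := by
        have hne : γ - 1 ≠ 0 := by linarith
        field_simp
        ring

lemma boundary_ge {γ : ℝ} (hγ : 2 < γ) {t : ℝ} (ht : 0 ≤ t) :
    boundary γ t ≥ -3 - Kfun γ * Real.sqrt t := by
  have hne : {n : ℕ | ((tseq γ n : ℝ)) ≤ t}.Nonempty := ⟨0, by simp [tseq, ht]⟩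
  have hbdd : BddAbove {n : ℕ | ((tseq γ n : ℝ)) ≤ t} := by
    refine ⟨⌊t / 4⌋₊, fun n hn => ?_⟩
    have h1 : (4 * n : ℝ) ≤ t := le_trans (tseq_ge hγ n) hn
    exact Nat.le_floor (by linarith)
  have hmem := Nat.sSup_mem hne hbdd
  set n := sSup {n : ℕ | ((tseq γ n : ℝ)) ≤ t} with hn
  have hmem' : ((tseq γ n : ℝ)) ≤ t := hmem
  have h1 := main_ineq hγ n
  have h2 : Real.sqrt (tseq γ n) ≤ Real.sqrt t := Real.sqrt_le_sqrt hmem'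
  have h3 : Kfun γ * Real.sqrt (tseq γ n) ≤ Kfun γ * Real.sqrt t :=
    mul_le_mul_of_nonneg_left h2 (Kfun_pos hγ).le
  unfold boundary
  rw [← hn]
  linarith

lemma Kfun_contOn {s : Set ℝ} (hs : ∀ x ∈ s, x - 1 ≠ 0) : ContinuousOn Kfun s := by
  apply ContinuousOn.mul (by fun_prop)
  exact Real.continuous_sqrt.comp_continuousOn
    (ContinuousOn.div (by fun_prop) (by fun_prop) hs)

lemma Kfun_smono : StrictMonoOn Kfun (Set.Ioi 2) := by
  intro a ha b hb hab
  have ha' : 2 < a := ha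
  have hb' : 2 < b := hb
  refine lt_of_pow_lt_pow_left₀ 2 (Kfun_pos hb').le ?_
  rw [hK2 ha', hK2 hb', ← mul_div_assoc, ← mul_div_assoc,
    div_lt_div_iff₀ (by linarith) (by linarith)]
  nlinarith [mul_pos (sub_pos.mpr ha') (sub_pos.mpr hab), sq_nonneg (a - 2),
    sq_nonneg (b - 2), mul_pos (sub_pos.mpr ha') (sub_pos.mpr hb'),
    mul_pos (mul_pos (sub_pos.mpr ha') (sub_pos.mpr hb')) (sub_pos.mpr hab),
    mul_pos (mul_pos (mul_pos (sub_pos.mpr ha') (sub_pos.mpr hb')) (sub_pos.mpr hb'))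
      (sub_pos.mpr hab)]

lemma Kfun_image : Kfun '' Set.Ioi 2 = Set.Ioi 0 := by
  apply Set.Subset.antisymm
  · rintro _ ⟨γ, hγ, rfl⟩
    exact Kfun_pos hγ
  · intro K hK
    have hK0 : (0:ℝ) < K := hK
    have hb : (2:ℝ) ≤ K + 3 := by linarith
    have hcont : ContinuousOn Kfun (Set.Icc 2 (K + 3)) :=
      Kfun_contOn fun x hx => by have := hx.1; linarith
    have h2 : Kfun 2 = 0 := by simp [Kfun]
    have h3 : K < Kfun (K + 3) := by
      have hs : 1 ≤ Real.sqrt ((K + 3 + 1) / (K + 3 - 1)) := by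
        rw [Real.one_le_sqrt]
        rw [le_div_iff₀ (by linarith)]
        linarith
      have : (K + 1) * 1 ≤ Kfun (K + 3) := by
        unfold Kfun
        have : (0:ℝ) ≤ K + 3 - 2 := by linarith
        nlinarith
      linarith
    have := intermediate_value_Ioo hb hcont (by rw [h2]; exact ⟨hK0, h3⟩)
    obtain ⟨γ, hγ, hγK⟩ := this
    exact ⟨γ, hγ.1, hγK⟩

lemma Kfun_exu (K : ℝ) (hK : 0 < K) : ∃! γ : ℝ, γ ∈ Set.Ioi (2:ℝ) ∧ Kfun γ = K := by
  have : K ∈ Kfun '' Set.Ioi 2 := Kfun_image ▸ hK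
  obtain ⟨γ, hγ, hγK⟩ := this
  exact ⟨γ, ⟨hγ, hγK⟩, fun y hy => Kfun_smono.injOn hy.1 hγ (hy.2.trans hγK.symm)⟩

/-- **The boundary lemma.** `γ ↦ (γ−2)√((γ+1)/(γ−1))` is a continuous strictly
increasing map from `(2,∞)` onto `(0,∞)` (so `γ(K)` is well defined for all `K > 0`),
and if `γ ∈ (2,∞)` solves `(γ−2)√((γ+1)/(γ−1)) = K` then the step function `∂^γ`
satisfies `∂^γ(t) ≥ −3 − K√t` for all `t ≥ 0`. -/
theorem exceptional_times_thm10 :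
    (ContinuousOn Kfun (Set.Ioi 2) ∧ StrictMonoOn Kfun (Set.Ioi 2) ∧
      Kfun '' Set.Ioi 2 = Set.Ioi 0) ∧
    (∀ K : ℝ, 0 < K → ∃! γ : ℝ, γ ∈ Set.Ioi (2 : ℝ) ∧ Kfun γ = K) ∧
    (∀ K γ : ℝ, 0 < K → 2 < γ → Kfun γ = K →
      ∀ t : ℝ, 0 ≤ t → boundary γ t ≥ -3 - K * Real.sqrt t) := by
  refine ⟨⟨Kfun_contOn fun x hx => by have : (2:ℝ) < x := hx; linarith,
    Kfun_smono, Kfun_image⟩, Kfun_exu, ?_⟩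
  intro K γ _ hγ hKγ t ht
  rw [← hKγ]
  exact boundary_ge hγ ht

end DyDWPaper
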